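/- arXiv:1909.07180 — 3 statements merged into one kernel-verified Lean document; each statement's English description precedes it below -/
import Mathlib

section
/- Let H = ΓT + U on ℓ²(Q_N) with U diagonal and T the negative hypercube adjacency operator. Then the pressure p_N(β,Γ) = N^{-1} ln(2^{-N} Tr e^{-βH}) satisfies p_N(β,Γ) ≥ ln cosh(βΓ) - (β/(N2^N)) ∑_{σ∈Q_N} U(σ). -/
/-- The negative adjacency operator `T` of the Hamming cube `Q_N`. -/
def Tmat (N : ℕ) : Matrix (Fin N → Bool) (Fin N → Bool) ℝ :=
  fun σ σ' => if hammingDist σ σ' = 1 then -1 else 0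

open Matrix in
/-- Peierls' inequality for the diagonal entries of the exponential of a
real symmetric matrix. -/
lemma peierls_diag {n : Type*} [Fintype n] [DecidableEq n]
    {B : Matrix n n ℝ} (hB : B.IsHermitian) (i : n) :
    Real.exp (B i i) ≤ (NormedSpace.exp B) i i := by
  classical
  set Um : Matrix n n ℝ := (hB.eigenvectorUnitary : Matrix n n ℝ) with hUm
  have hmem := hB.eigenvectorUnitary.2
  have hstar : star Um * Um = 1 := (Unitary.mem_iff.mp hmem).1
  have hstar' : Um * star Um = 1 := (Unitary.mem_iff.mp hmem).2
  have hinv : Um⁻¹ = star Um := Matrix.inv_eq_left_inv hstar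
  have hspec : B = Um * Matrix.diagonal hB.eigenvalues * star Um := by
    have := hB.spectral_theorem
    simpa using this
  have hexp : NormedSpace.exp B
      = Um * Matrix.diagonal (fun k => Real.exp (hB.eigenvalues k)) * star Um := by
    have hspec' : B = Um * Matrix.diagonal hB.eigenvalues * Um⁻¹ := by
      rw [hinv]; exact hspec
    conv_lhs => rw [hspec']
    rw [Matrix.exp_conj Um _ ⟨⟨Um, star Um, hstar', hstar⟩, rfl⟩,
      Matrix.exp_diagonal, hinv]
    congr 1
    congr 1
    rw [Pi.exp_def]
    funext k
    rw [← Real.exp_eq_exp_ℝ]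
  have entry : ∀ d : n → ℝ, (Um * Matrix.diagonal d * star Um) i i
      = ∑ k, (Um i k)^2 * d k := by
    intro d
    rw [Matrix.mul_apply]
    congr 1; funext k
    rw [Matrix.mul_diagonal]
    simp [Matrix.conjTranspose_apply, sq]
    ring
  have hw : ∑ k, (Um i k)^2 = 1 := by
    have := congrFun (congrFun hstar' i) i
    rw [Matrix.mul_apply] at this
    simpa [Matrix.conjTranspose_apply, sq] using this
  have hBii : B i i = ∑ k, (Um i k)^2 * hB.eigenvalues k := by
    conv_lhs => rw [hspec]
    exact entry _
  rw [hexp, entry, hBii]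
  have := convexOn_exp.map_sum_le (t := Finset.univ) (w := fun k => (Um i k)^2)
    (p := hB.eigenvalues) (fun k _ => sq_nonneg _) hw (fun k _ => Set.mem_univ _)
  simpa [smul_eq_mul] using this

/-- The (symmetric, orthogonal) Hadamard matrix diagonalizing `Tmat`. -/
noncomputable def Vmat (N : ℕ) : Matrix (Fin N → Bool) (Fin N → Bool) ℝ :=
  fun σ τ => (Real.sqrt 2)⁻¹ ^ N * ∏ j, (if σ j && τ j then (-1:ℝ) else 1)

/-- Eigenvalues of `Tmat` in the Hadamard basis. -/
def lamv (N : ℕ) : (Fin N → Bool) → ℝ := fun τ => ∑ j, (if τ j then (1:ℝ) else -1)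

lemma Vmat_symm (N : ℕ) (σ τ : Fin N → Bool) : Vmat N σ τ = Vmat N τ σ := by
  unfold Vmat
  congr 1
  apply Finset.prod_congr rfl
  intro j _
  rw [Bool.and_comm]

lemma Vmat_sq (N : ℕ) (σ τ : Fin N → Bool) : (Vmat N σ τ)^2 = (2:ℝ)⁻¹ ^ N := by
  unfold Vmat
  rw [mul_pow]
  have h1 : (((Real.sqrt 2)⁻¹) ^ N)^2 = (2:ℝ)⁻¹ ^ N := by
    rw [← pow_mul, mul_comm N 2, pow_mul, inv_pow, Real.sq_sqrt (by norm_num : (0:ℝ) ≤ 2)]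
  have h2 : ∀ j : Fin N, (if σ j && τ j then (-1:ℝ) else 1)^2 = 1 := by
    intro j; split <;> norm_num
  rw [h1, ← Finset.prod_pow, Finset.prod_congr rfl (fun j _ => h2 j),
    Finset.prod_const_one, mul_one]

lemma Vmat_mul_self (N : ℕ) : Vmat N * Vmat N = 1 := by
  ext σ σ'
  rw [Matrix.mul_apply]
  have key : ∀ τ : Fin N → Bool, Vmat N σ τ * Vmat N τ σ'
      = (2:ℝ)⁻¹^N * ∏ j, ((if σ j && τ j then (-1:ℝ) else 1) *
          (if τ j && σ' j then (-1:ℝ) else 1)) := by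
    intro τ
    unfold Vmat
    rw [Finset.prod_mul_distrib]
    have hc : ((Real.sqrt 2)⁻¹ ^ N) * ((Real.sqrt 2)⁻¹ ^ N) = (2:ℝ)⁻¹^N := by
      rw [← mul_pow, ← mul_inv, Real.mul_self_sqrt (by norm_num : (0:ℝ) ≤ 2)]
    rw [← hc]
    ring
  rw [Finset.sum_congr rfl (fun τ _ => key τ), ← Finset.mul_sum]
  have swap : ∑ τ : Fin N → Bool, ∏ j, ((if σ j && τ j then (-1:ℝ) else 1) *
      (if τ j && σ' j then (-1:ℝ) else 1))
      = ∏ j, ∑ b : Bool, ((if σ j && b then (-1:ℝ) else 1) *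
          (if b && σ' j then (-1:ℝ) else 1)) := by
    rw [← Finset.sum_prod_piFinset Finset.univ
      (fun j b => (if σ j && b then (-1:ℝ) else 1) * (if b && σ' j then (-1:ℝ) else 1))]
    rw [Fintype.piFinset_univ]
  rw [swap]
  have inner : ∀ j : Fin N, (∑ b : Bool, ((if σ j && b then (-1:ℝ) else 1) *
      (if b && σ' j then (-1:ℝ) else 1))) = if σ j = σ' j then 2 else 0 := by
    intro j
    cases hσ : σ j <;> cases hσ' : σ' j <;> simp [hσ, hσ'] <;> norm_num
  rw [Finset.prod_congr rfl (fun j _ => inner j)]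
  by_cases h : σ = σ'
  · subst h
    rw [Matrix.one_apply_eq,
      Finset.prod_congr rfl (fun (j : Fin N) _ => if_pos rfl), Finset.prod_const,
      Finset.card_univ, Fintype.card_fin, ← mul_pow]
    norm_num
  · obtain ⟨j, hj⟩ : ∃ j, σ j ≠ σ' j := by
      by_contra hc
      push_neg at hc
      exact h (funext hc)
    rw [Finset.prod_eq_zero (Finset.mem_univ j) (by simp [hj]), mul_zero]
    simp [Matrix.one_apply, h]

lemma Vmat_update (N : ℕ) (σ τ : Fin N → Bool) (j : Fin N) :
    Vmat N (Function.update σ j (!σ j)) τ = (if τ j then (-1:ℝ) else 1) * Vmat N σ τ := by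
  unfold Vmat
  have hfun : (fun i => if Function.update σ j (!σ j) i && τ i then (-1:ℝ) else 1)
      = Function.update (fun i => if σ i && τ i then (-1:ℝ) else 1) j
          (if !σ j && τ j then (-1:ℝ) else 1) := by
    funext i
    by_cases hi : i = j
    · subst hi; simp
    · simp [Function.update_of_ne hi]
  rw [hfun, Finset.prod_update_of_mem (Finset.mem_univ j)]
  rw [Finset.prod_eq_mul_prod_sdiff_singleton_of_mem (Finset.mem_univ j)
    (fun i => if σ i && τ i then (-1:ℝ) else 1)]
  have factor : (if !σ j && τ j then (-1:ℝ) else 1)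
      = (if τ j then (-1:ℝ) else 1) * (if σ j && τ j then (-1:ℝ) else 1) := by
    cases hσ : σ j <;> cases hτ : τ j <;> norm_num
  rw [factor]
  ring

lemma flip_sum (N : ℕ) (σ : Fin N → Bool) (g : (Fin N → Bool) → ℝ) :
    ∑ σ', Tmat N σ σ' * g σ' = -∑ j, g (Function.update σ j (!σ j)) := by
  classical
  have h1 : ∑ σ', Tmat N σ σ' * g σ'
      = ∑ σ' ∈ Finset.univ.filter (fun σ' => hammingDist σ σ' = 1), -g σ' := by
    rw [Finset.sum_filter]
    apply Finset.sum_congr rfl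
    intro σ' _
    unfold Tmat
    split <;> ring
  have himg : Finset.univ.filter (fun σ' => hammingDist σ σ' = 1)
      = Finset.image (fun j => Function.update σ j (!σ j)) Finset.univ := by
    ext σ'
    simp only [Finset.mem_filter, Finset.mem_image, Finset.mem_univ, true_and]
    constructor
    · intro hd
      unfold hammingDist at hd
      obtain ⟨j, hj⟩ := Finset.card_eq_one.mp hd
      refine ⟨j, ?_⟩
      have hjmem : j ∈ Finset.univ.filter (fun i => σ i ≠ σ' i) := by
        rw [hj]; exact Finset.mem_singleton_self j
      have hjne : σ j ≠ σ' j := (Finset.mem_filter.mp hjmem).2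
      funext i
      by_cases hi : i = j
      · subst hi
        simp only [Function.update_self]
        cases hσ : σ i <;> cases hσ' : σ' i <;> simp_all
      · have : i ∉ Finset.univ.filter (fun i => σ i ≠ σ' i) := by
          rw [hj]; simp [hi]
        have : ¬ σ i ≠ σ' i := by
          intro hc; exact this (Finset.mem_filter.mpr ⟨Finset.mem_univ i, hc⟩)
        simp [Function.update_of_ne hi]
        tauto
    · rintro ⟨j, rfl⟩
      unfold hammingDist
      have : Finset.univ.filter (fun i => σ i ≠ Function.update σ j (!σ j) i) = {j} := by
        ext i
        simp only [Finset.mem_filter, Finset.mem_univ, true_and, Finset.mem_singleton]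
        by_cases hi : i = j
        · subst hi
          simp
        · simp [Function.update_of_ne hi, hi]
      rw [this, Finset.card_singleton]
  have hinj : ∀ j ∈ (Finset.univ : Finset (Fin N)), ∀ j' ∈ (Finset.univ : Finset (Fin N)),
      Function.update σ j (!σ j) = Function.update σ j' (!σ j') → j = j' := by
    intro j _ j' _ h
    by_contra hne
    have h1 := congrFun h j
    rw [Function.update_self, Function.update_of_ne hne] at h1
    cases hσj : σ j <;> simp_all
  rw [h1, himg, Finset.sum_image hinj, ← Finset.sum_neg_distrib]

lemma Tmat_mul_Vmat (N : ℕ) :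
    Tmat N * Vmat N = Vmat N * Matrix.diagonal (lamv N) := by
  ext σ τ
  rw [Matrix.mul_apply, Matrix.mul_diagonal]
  rw [flip_sum N σ (fun σ' => Vmat N σ' τ)]
  have : ∀ j : Fin N, Vmat N (Function.update σ j (!σ j)) τ
      = (if τ j then (-1:ℝ) else 1) * Vmat N σ τ := fun j => Vmat_update N σ τ j
  rw [Finset.sum_congr rfl (fun j _ => this j), ← Finset.sum_mul]
  have hS : lamv N τ = -∑ j, (if τ j then (-1:ℝ) else 1) := by
    unfold lamv
    rw [← Finset.sum_neg_distrib]
    apply Finset.sum_congr rfl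
    intro j _
    split <;> norm_num
  rw [hS]
  ring

open Matrix

lemma Tmat_isHermitian (N : ℕ) : (Tmat N).IsHermitian := by
  show (Tmat N)ᴴ = Tmat N
  ext σ τ
  simp only [Matrix.conjTranspose_apply, Tmat, star_trivial]
  rw [hammingDist_comm]

set_option maxHeartbeats 1000000 in
/-- Paramagnetic lower bound on the pressure:
`p_N(β,Γ) ≥ ln cosh(βΓ) - (β/(N 2^N)) ∑_σ U(σ)`. -/
theorem pressure_ge_paramagnetic (N : ℕ) (hN : 0 < N) (β Γ : ℝ) (hβ : 0 ≤ β) (hΓ : 0 ≤ Γ)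
    (U : (Fin N → Bool) → ℝ) :
    Real.log (Real.cosh (β * Γ)) - β / (N * 2 ^ N) * ∑ σ, U σ ≤
      Real.log ((2 : ℝ)⁻¹ ^ N *
        (NormedSpace.exp (-(β • (Γ • Tmat N + Matrix.diagonal U)))).trace) / N := by
  classical
  set A : Matrix (Fin N → Bool) (Fin N → Bool) ℝ :=
    -(β • (Γ • Tmat N + Matrix.diagonal U)) with hAdef
  set V := Vmat N with hVdef
  have hVV : V * V = 1 := Vmat_mul_self N
  have hVh : Vᴴ = V := by
    ext σ τ
    rw [Matrix.conjTranspose_apply, star_trivial]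
    exact Vmat_symm N τ σ
  have hA : A.IsHermitian := by
    show Aᴴ = A
    rw [hAdef]
    rw [Matrix.conjTranspose_neg, Matrix.conjTranspose_smul, Matrix.conjTranspose_add,
      Matrix.conjTranspose_smul, Matrix.diagonal_conjTranspose, Tmat_isHermitian N]
    simp [star_trivial]
  set B := V * A * V with hBdef
  have hB : B.IsHermitian := by
    have := Matrix.isHermitian_conjTranspose_mul_mul V hA
    rwa [hVh] at this
  -- trace identity
  have hVinv : V⁻¹ = V := Matrix.inv_eq_left_inv hVV
  have hexpB : NormedSpace.exp B = V * NormedSpace.exp A * V := by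
    have : B = V * A * V⁻¹ := by rw [hVinv]
    rw [this, Matrix.exp_conj V A ⟨⟨V, V, hVV, hVV⟩, rfl⟩, hVinv]
  have htrace : (NormedSpace.exp B).trace = (NormedSpace.exp A).trace := by
    rw [hexpB, Matrix.trace_mul_cycle, hVV, Matrix.one_mul]
  -- diagonal entries of B
  have hVTV : V * Tmat N * V = Matrix.diagonal (lamv N) := by
    rw [Matrix.mul_assoc, Tmat_mul_Vmat, ← Matrix.mul_assoc, hVV, Matrix.one_mul]
  have hBdiag : ∀ τ, B τ τ = -(β * (Γ * lamv N τ + (2:ℝ)⁻¹^N * ∑ σ, U σ)) := by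
    intro τ
    have hexpand : B = -(β • (Γ • (V * Tmat N * V) + V * Matrix.diagonal U * V)) := by
      rw [hBdef, hAdef]
      rw [Matrix.mul_neg, Matrix.neg_mul]
      congr 1
      rw [Matrix.mul_smul, Matrix.smul_mul]
      congr 1
      rw [Matrix.mul_add, Matrix.add_mul]
      congr 1
      rw [Matrix.mul_smul, Matrix.smul_mul]
    have hdiagU : (V * Matrix.diagonal U * V) τ τ = (2:ℝ)⁻¹^N * ∑ σ, U σ := by
      rw [Matrix.mul_apply]
      have : ∀ σ, (V * Matrix.diagonal U) τ σ * V σ τ = (2:ℝ)⁻¹^N * U σ := by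
        intro σ
        rw [Matrix.mul_diagonal]
        simp only [hVdef]
        rw [Vmat_symm N σ τ]
        rw [show Vmat N τ σ * U σ * Vmat N τ σ = (Vmat N τ σ)^2 * U σ by ring, Vmat_sq]
      rw [Finset.sum_congr rfl (fun σ _ => this σ), ← Finset.mul_sum]
    rw [hexpand]
    simp only [Matrix.neg_apply, Matrix.smul_apply, Matrix.add_apply, hVTV,
      Matrix.diagonal_apply_eq, smul_eq_mul]
    rw [hdiagU]
  -- Peierls bound on the trace
  have hpeierls : ∑ τ, Real.exp (B τ τ) ≤ (NormedSpace.exp A).trace := by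
    rw [← htrace, Matrix.trace]
    exact Finset.sum_le_sum (fun τ _ => peierls_diag hB τ)
  -- compute the sum of exponentials
  set c : ℝ := β * ((2:ℝ)⁻¹^N * ∑ σ, U σ) with hcdef
  have hsum : ∑ τ, Real.exp (B τ τ) = Real.exp (-c) * (2 * Real.cosh (β * Γ))^N := by
    have h1 : ∀ τ, Real.exp (B τ τ)
        = Real.exp (-c) * ∏ j, Real.exp (-(β * Γ) * (if τ j then (1:ℝ) else -1)) := by
      intro τ
      have hsum1 : ∑ j, (-(β * Γ) * (if τ j then (1:ℝ) else -1)) = -(β * Γ) * lamv N τ := by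
        rw [← Finset.mul_sum]; rfl
      rw [hBdiag τ, ← Real.exp_sum, ← Real.exp_add, hsum1, hcdef]
      congr 1
      ring
    rw [Finset.sum_congr rfl (fun τ _ => h1 τ), ← Finset.mul_sum]
    congr 1
    have h2 : ∑ τ : Fin N → Bool, ∏ j, Real.exp (-(β * Γ) * (if τ j then (1:ℝ) else -1))
        = ∏ j : Fin N, ∑ b : Bool, Real.exp (-(β * Γ) * (if b then (1:ℝ) else -1)) := by
      rw [← Finset.sum_prod_piFinset Finset.univ
        (fun (j : Fin N) (b : Bool) => Real.exp (-(β * Γ) * (if b then (1:ℝ) else -1)))]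
      rw [Fintype.piFinset_univ]
    rw [h2]
    have h3 : ∀ j : Fin N, (∑ b : Bool, Real.exp (-(β * Γ) * (if b then (1:ℝ) else -1)))
        = 2 * Real.cosh (β * Γ) := by
      intro j
      have e1 : -(β * Γ) * (if (true : Bool) then (1:ℝ) else -1) = -(β * Γ) := by norm_num
      have e2 : -(β * Γ) * (if (false : Bool) then (1:ℝ) else -1) = β * Γ := by norm_num
      rw [Fintype.sum_bool, e1, e2, Real.cosh_eq]
      ring
    rw [Finset.prod_congr rfl (fun j _ => h3 j), Finset.prod_const, Finset.card_univ,
      Fintype.card_fin]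
  -- positivity and logs
  have hcosh : (0:ℝ) < Real.cosh (β * Γ) := Real.cosh_pos _
  have hNR : (0:ℝ) < N := by exact_mod_cast hN
  have hlow : Real.exp (-c) * (2 * Real.cosh (β * Γ))^N ≤ (NormedSpace.exp A).trace := by
    rw [← hsum]; exact hpeierls
  have hmul : Real.exp (-c) * Real.cosh (β * Γ)^N ≤ (2:ℝ)⁻¹^N * (NormedSpace.exp A).trace := by
    have hstep := mul_le_mul_of_nonneg_left hlow (by positivity : (0:ℝ) ≤ (2:ℝ)⁻¹^N)
    calc Real.exp (-c) * Real.cosh (β * Γ)^N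
        = (2:ℝ)⁻¹^N * (Real.exp (-c) * (2 * Real.cosh (β * Γ))^N) := by
          rw [mul_pow, show ((2:ℝ)⁻¹)^N * (Real.exp (-c) * ((2:ℝ)^N * Real.cosh (β * Γ)^N))
            = (((2:ℝ)⁻¹ * 2)^N) * (Real.exp (-c) * Real.cosh (β * Γ)^N) by rw [mul_pow]; ring]
          norm_num
      _ ≤ (2:ℝ)⁻¹^N * (NormedSpace.exp A).trace := hstep
  have hpos : (0:ℝ) < Real.exp (-c) * Real.cosh (β * Γ)^N := by positivity
  have hlog := Real.log_le_log hpos hmul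
  rw [Real.log_mul (Real.exp_ne_zero _) (by positivity), Real.log_exp, Real.log_pow] at hlog
  have hdiv : (-c + (N : ℝ) * Real.log (Real.cosh (β * Γ))) / (N : ℝ)
      ≤ Real.log ((2:ℝ)⁻¹^N * (NormedSpace.exp A).trace) / (N : ℝ) := by
    apply div_le_div_of_nonneg_right ?_ hNR.le
    · exact_mod_cast hlog
  have hfinal : (-c + (N : ℝ) * Real.log (Real.cosh (β * Γ))) / (N : ℝ)
      = Real.log (Real.cosh (β * Γ)) - β / (N * 2 ^ N) * ∑ σ, U σ := by
    rw [hcdef, inv_pow]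
    field_simp
    ring
  rw [← hfinal]
  exact hdiv
end

section
/- Let L = ⋃_α C^{(α)} be a decomposition of a subset L ⊆ Q_N into subsets with pairwise distance d(C^{(α)}, C^{(α')}) > 2 for α ≠ α'. Let A_L be the 0-1 matrix with entries A_L(σ,σ') = 1 iff d(σ,σ') = 1 and (σ ∈ L or σ' ∈ L). Then ‖A_L‖ = max_α ‖A_{C^{(α)}}‖, and consequently ‖A_L‖ ≤ √(2N max_α |C^{(α)}|). -/
set_option linter.unusedSectionVars false
set_option maxHeartbeats 1000000

/-- The ℓ²-operator norm of a real square matrix. -/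
noncomputable def matOpNorm {n : Type*} [Fintype n] [DecidableEq n] (A : Matrix n n ℝ) : ℝ :=
  ‖Matrix.toEuclideanCLM (𝕜 := ℝ) A‖

/-- The 0-1 matrix of edges of the Hamming cube reaching the set `C`. -/
def edgeBoundaryMatrix (N : ℕ) (C : Finset (Fin N → Bool)) :
    Matrix (Fin N → Bool) (Fin N → Bool) ℝ :=
  fun σ σ' => if hammingDist σ σ' = 1 ∧ (σ ∈ C ∨ σ' ∈ C) then 1 else 0

section Bridge

variable {n : Type*} [Fintype n] [DecidableEq n]

lemma euclid_norm_sq (y : n → ℝ) :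
    ‖(WithLp.equiv 2 (n → ℝ)).symm y‖ ^ 2 = ∑ i, (y i) ^ 2 := by
  rw [EuclideanSpace.norm_eq, Real.sq_sqrt (by positivity)]
  simp [WithLp.equiv_symm_apply, PiLp.toLp_apply, sq_abs]

lemma mulVec_sq_sum_le (A : Matrix n n ℝ) (x : n → ℝ) :
    ∑ i, (A.mulVec x i) ^ 2 ≤ (matOpNorm A) ^ 2 * ∑ i, (x i) ^ 2 := by
  have h := (Matrix.toEuclideanCLM (𝕜 := ℝ) A).le_opNorm ((WithLp.equiv 2 (n → ℝ)).symm x)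
  have h2 : Matrix.toEuclideanCLM (𝕜 := ℝ) A ((WithLp.equiv 2 (n → ℝ)).symm x)
      = (WithLp.equiv 2 (n → ℝ)).symm (A.mulVec x) := by
    exact Matrix.toEuclideanCLM_toLp A x
  rw [h2] at h
  have h3 := pow_le_pow_left₀ (norm_nonneg _) h 2
  rw [mul_pow, euclid_norm_sq, euclid_norm_sq] at h3
  exact h3

lemma matOpNorm_le_of_mulVec (A : Matrix n n ℝ) {c : ℝ} (hc : 0 ≤ c)
    (h : ∀ x : n → ℝ, ∑ i, (A.mulVec x i) ^ 2 ≤ c ^ 2 * ∑ i, (x i) ^ 2) :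
    matOpNorm A ≤ c := by
  refine ContinuousLinearMap.opNorm_le_bound _ hc fun x => ?_
  set y : n → ℝ := WithLp.equiv 2 (n → ℝ) x with hy
  have hx : x = (WithLp.equiv 2 (n → ℝ)).symm y := rfl
  rw [hx, show Matrix.toEuclideanCLM (𝕜 := ℝ) A ((WithLp.equiv 2 (n → ℝ)).symm y)
      = (WithLp.equiv 2 (n → ℝ)).symm (A.mulVec y) from rfl]
  have h1 : ‖(WithLp.equiv 2 (n → ℝ)).symm (A.mulVec y)‖ ^ 2
      ≤ (c * ‖(WithLp.equiv 2 (n → ℝ)).symm y‖) ^ 2 := by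
    rw [euclid_norm_sq, mul_pow, euclid_norm_sq]
    exact h y
  have h2 := Real.sqrt_le_sqrt h1
  rwa [Real.sqrt_sq (norm_nonneg _), Real.sqrt_sq (by positivity)] at h2

lemma matOpNorm_mono {A B : Matrix n n ℝ} (hB : ∀ i j, 0 ≤ B i j)
    (hBA : ∀ i j, B i j ≤ A i j) : matOpNorm B ≤ matOpNorm A := by
  refine matOpNorm_le_of_mulVec B (norm_nonneg _) fun x => ?_
  have key : ∀ i, (B.mulVec x i) ^ 2 ≤ (A.mulVec (fun j => |x j|) i) ^ 2 := by
    intro i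
    have h1 : |B.mulVec x i| ≤ A.mulVec (fun j => |x j|) i := by
      refine (Finset.abs_sum_le_sum_abs _ _).trans (Finset.sum_le_sum fun j _ => ?_)
      rw [abs_mul]
      exact mul_le_mul (by rw [abs_of_nonneg (hB i j)]; exact hBA i j) le_rfl (abs_nonneg _)
        ((hB i j).trans (hBA i j))
    calc (B.mulVec x i) ^ 2 = |B.mulVec x i| ^ 2 := (sq_abs _).symm
      _ ≤ (A.mulVec (fun j => |x j|) i) ^ 2 := pow_le_pow_left₀ (abs_nonneg _) h1 2
  calc ∑ i, (B.mulVec x i) ^ 2 ≤ ∑ i, (A.mulVec (fun j => |x j|) i) ^ 2 :=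
        Finset.sum_le_sum fun i _ => key i
    _ ≤ (matOpNorm A) ^ 2 * ∑ i, |x i| ^ 2 := mulVec_sq_sum_le A _
    _ = (matOpNorm A) ^ 2 * ∑ i, (x i) ^ 2 := by simp [sq_abs]

lemma matOpNorm_le_frobenius (A : Matrix n n ℝ) :
    matOpNorm A ≤ Real.sqrt (∑ i, ∑ j, (A i j) ^ 2) := by
  refine matOpNorm_le_of_mulVec A (Real.sqrt_nonneg _) fun x => ?_
  rw [Real.sq_sqrt (by positivity), Finset.sum_mul]
  refine Finset.sum_le_sum fun i _ => ?_
  exact Finset.sum_mul_sq_le_sq_mul_sq Finset.univ (fun j => A i j) x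

end Bridge

lemma hd_update (N : ℕ) (σ : Fin N → Bool) (i : Fin N) :
    hammingDist σ (Function.update σ i (!σ i)) = 1 := by
  have hset : ({j | σ j ≠ Function.update σ i (!σ i) j} : Finset (Fin N)) = {i} := by
    ext j
    rcases eq_or_ne j i with rfl | h
    · simp
    · simp [Function.update_of_ne h, h]
  simp only [hammingDist, hset, Finset.card_singleton]

lemma sphere_card (N : ℕ) (σ : Fin N → Bool) :
    (Finset.univ.filter fun σ' => hammingDist σ σ' = 1).card = N := by
  classical
  have h := Finset.card_bij (s := (Finset.univ : Finset (Fin N)))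
    (t := Finset.univ.filter fun σ' => hammingDist σ σ' = 1)
    (fun i _ => Function.update σ i (!σ i)) ?_ ?_ ?_
  · simpa using h.symm
  · intro i _
    simp only [Finset.mem_filter, Finset.mem_univ, true_and]
    exact hd_update N σ i
  · intro i _ j _ h
    by_contra hij
    have h2 := congrFun h i
    simp only [Function.update_self, Function.update_of_ne hij] at h2
    exact (Bool.not_ne_self (σ i)) h2
  · intro σ' hσ'
    simp only [Finset.mem_filter, Finset.mem_univ, true_and] at hσ'
    obtain ⟨i, hi⟩ := Finset.card_eq_one.mp hσ'
    refine ⟨i, Finset.mem_univ i, ?_⟩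
    have hiD : σ i ≠ σ' i := by
      have hin : i ∈ ({j | σ j ≠ σ' j} : Finset (Fin N)) := by
        rw [hi]; exact Finset.mem_singleton_self i
      simpa using hin
    funext j
    rcases eq_or_ne j i with rfl | h
    · simp only [Function.update_self]
      cases hσj : σ j <;> cases hσ'j : σ' j <;> simp_all
    · simp only [Function.update_of_ne h]
      by_contra hne
      have hin : j ∈ ({k | σ k ≠ σ' k} : Finset (Fin N)) := by simpa using hne
      rw [hi] at hin
      exact h (Finset.mem_singleton.mp hin)

lemma frob_count (N : ℕ) (C : Finset (Fin N → Bool)) :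
    ∑ σ, ∑ σ', (edgeBoundaryMatrix N C σ σ') ^ 2 ≤ 2 * N * C.card := by
  classical
  have hbound : ∀ σ σ', (edgeBoundaryMatrix N C σ σ') ^ 2 ≤
      (if hammingDist σ σ' = 1 ∧ σ ∈ C then (1 : ℝ) else 0)
      + (if hammingDist σ σ' = 1 ∧ σ' ∈ C then (1 : ℝ) else 0) := by
    intro σ σ'
    unfold edgeBoundaryMatrix
    by_cases h : hammingDist σ σ' = 1 ∧ (σ ∈ C ∨ σ' ∈ C)
    · rw [if_pos h, one_pow]
      rcases h.2 with hm | hm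
      · have h1 : (if hammingDist σ σ' = 1 ∧ σ ∈ C then (1:ℝ) else 0) = 1 := if_pos ⟨h.1, hm⟩
        have h2 : (0:ℝ) ≤ if hammingDist σ σ' = 1 ∧ σ' ∈ C then (1:ℝ) else 0 := by positivity
        linarith
      · have h1 : (if hammingDist σ σ' = 1 ∧ σ' ∈ C then (1:ℝ) else 0) = 1 := if_pos ⟨h.1, hm⟩
        have h2 : (0:ℝ) ≤ if hammingDist σ σ' = 1 ∧ σ ∈ C then (1:ℝ) else 0 := by positivity
        linarith
    · rw [if_neg h]
      have h1 : (0:ℝ) ≤ if hammingDist σ σ' = 1 ∧ σ ∈ C then (1:ℝ) else 0 := by positivity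
      have h2 : (0:ℝ) ≤ if hammingDist σ σ' = 1 ∧ σ' ∈ C then (1:ℝ) else 0 := by positivity
      rw [zero_pow (by norm_num)]
      linarith
  have hterm1 : ∀ σ : Fin N → Bool,
      ∑ σ', (if hammingDist σ σ' = 1 ∧ σ ∈ C then (1 : ℝ) else 0)
        = if σ ∈ C then (N : ℝ) else 0 := by
    intro σ
    by_cases hσ : σ ∈ C
    · rw [if_pos hσ]
      have : ∑ σ', (if hammingDist σ σ' = 1 ∧ σ ∈ C then (1 : ℝ) else 0)
          = ∑ σ', (if hammingDist σ σ' = 1 then (1 : ℝ) else 0) := by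
        refine Finset.sum_congr rfl fun σ' _ => ?_
        simp [hσ]
      rw [this, Finset.sum_boole, sphere_card]
    · rw [if_neg hσ]
      simp [hσ]
  have hterm2 : ∀ σ' : Fin N → Bool,
      ∑ σ, (if hammingDist σ σ' = 1 ∧ σ' ∈ C then (1 : ℝ) else 0)
        = if σ' ∈ C then (N : ℝ) else 0 := by
    intro σ'
    by_cases hσ : σ' ∈ C
    · rw [if_pos hσ]
      have : ∑ σ, (if hammingDist σ σ' = 1 ∧ σ' ∈ C then (1 : ℝ) else 0)
          = ∑ σ, (if hammingDist σ' σ = 1 then (1 : ℝ) else 0) := by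
        refine Finset.sum_congr rfl fun σ _ => ?_
        rw [hammingDist_comm]
        simp [hσ]
      rw [this, Finset.sum_boole, sphere_card]
    · rw [if_neg hσ]
      simp [hσ]
  have hCN : ∑ σ, (if σ ∈ C then (N : ℝ) else 0) = C.card * N := by
    rw [Finset.sum_ite_mem, Finset.univ_inter, Finset.sum_const, nsmul_eq_mul]
  calc ∑ σ, ∑ σ', (edgeBoundaryMatrix N C σ σ') ^ 2
      ≤ ∑ σ, ∑ σ', ((if hammingDist σ σ' = 1 ∧ σ ∈ C then (1 : ℝ) else 0)
        + (if hammingDist σ σ' = 1 ∧ σ' ∈ C then (1 : ℝ) else 0)) :=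
        Finset.sum_le_sum fun σ _ => Finset.sum_le_sum fun σ' _ => hbound σ σ'
    _ = (∑ σ, ∑ σ', (if hammingDist σ σ' = 1 ∧ σ ∈ C then (1 : ℝ) else 0))
        + ∑ σ, ∑ σ', (if hammingDist σ σ' = 1 ∧ σ' ∈ C then (1 : ℝ) else 0) := by
        simp [Finset.sum_add_distrib]
    _ = (∑ σ, (if σ ∈ C then (N : ℝ) else 0)) + ∑ σ', (if σ' ∈ C then (N : ℝ) else 0) := by
        rw [Finset.sum_congr rfl fun σ _ => hterm1 σ, Finset.sum_comm,
          Finset.sum_congr rfl fun σ' _ => hterm2 σ']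
    _ = 2 * N * C.card := by rw [hCN]; ring

/-- If `L = ⋃_α C^{(α)}` is decomposed into components with pairwise distance `> 2`, then
`‖A_L‖ = max_α ‖A_{C^{(α)}}‖ ≤ √(2N max_α |C^{(α)}|)`. -/
theorem opNorm_edgeBoundary_decomposition {ι : Type*} [Fintype ι] [Nonempty ι]
    (N : ℕ) (L : Finset (Fin N → Bool)) (C : ι → Finset (Fin N → Bool))
    (hL : ∀ σ, σ ∈ L ↔ ∃ α, σ ∈ C α)
    (hdist : ∀ α α', α ≠ α' → ∀ σ ∈ C α, ∀ σ' ∈ C α', 2 < hammingDist σ σ') :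
    matOpNorm (edgeBoundaryMatrix N L) =
      Finset.univ.sup' Finset.univ_nonempty (fun α => matOpNorm (edgeBoundaryMatrix N (C α))) ∧
    matOpNorm (edgeBoundaryMatrix N L) ≤
      Real.sqrt (2 * N * (Finset.univ.sup fun α => (C α).card)) := by
  classical
  set M : ℝ := Finset.univ.sup' Finset.univ_nonempty
    (fun α => matOpNorm (edgeBoundaryMatrix N (C α))) with hM
  -- "near" predicate
  set near : ι → (Fin N → Bool) → Prop := fun α σ => ∃ τ ∈ C α, hammingDist σ τ ≤ 1 with hnear
  have hM0 : 0 ≤ M := le_trans (norm_nonneg (Matrix.toEuclideanCLM (𝕜 := ℝ)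
      (edgeBoundaryMatrix N (C (Classical.arbitrary ι)))))
    (Finset.le_sup' (fun α => matOpNorm (edgeBoundaryMatrix N (C α)))
      (Finset.mem_univ (Classical.arbitrary ι)))
  have huniq : ∀ {α β σ}, near α σ → near β σ → α = β := by
    rintro α β σ ⟨τ, hτ, h1⟩ ⟨τ', hτ', h2⟩
    by_contra hne
    have hd := hdist α β hne τ hτ τ' hτ'
    have htri := hammingDist_triangle_left τ τ' σ
    omega
  have hAL_eq : ∀ α σ, near α σ →
      ∀ σ', edgeBoundaryMatrix N L σ σ' = edgeBoundaryMatrix N (C α) σ σ' := by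
    intro α σ hσ σ'
    refine if_congr ?_ rfl rfl
    constructor
    · rintro ⟨hd, hm | hm⟩
      · obtain ⟨β, hβ⟩ := (hL σ).mp hm
        have hβσ : near β σ := ⟨σ, hβ, by simp⟩
        exact ⟨hd, Or.inl ((huniq hβσ hσ) ▸ hβ)⟩
      · obtain ⟨β, hβ⟩ := (hL σ').mp hm
        have hβσ : near β σ := ⟨σ', hβ, le_of_eq hd⟩
        exact ⟨hd, Or.inr ((huniq hβσ hσ) ▸ hβ)⟩
    · rintro ⟨hd, hm | hm⟩
      · exact ⟨hd, Or.inl ((hL σ).mpr ⟨α, hm⟩)⟩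
      · exact ⟨hd, Or.inr ((hL σ').mpr ⟨α, hm⟩)⟩
  have hAL_zero : ∀ σ, (∀ α, ¬ near α σ) → ∀ σ', edgeBoundaryMatrix N L σ σ' = 0 := by
    intro σ h σ'
    rw [edgeBoundaryMatrix, if_neg]
    rintro ⟨hd, hm | hm⟩
    · obtain ⟨β, hβ⟩ := (hL σ).mp hm
      exact h β ⟨σ, hβ, by simp⟩
    · obtain ⟨β, hβ⟩ := (hL σ').mp hm
      exact h β ⟨σ', hβ, le_of_eq hd⟩
  have hcol : ∀ α σ σ', edgeBoundaryMatrix N (C α) σ σ' ≠ 0 → near α σ' := by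
    intro α σ σ' h
    have hcond : hammingDist σ σ' = 1 ∧ (σ ∈ C α ∨ σ' ∈ C α) := by
      by_contra hc
      exact h (if_neg hc)
    rcases hcond.2 with hm | hm
    · exact ⟨σ, hm, le_of_eq (by rw [hammingDist_comm]; exact hcond.1)⟩
    · exact ⟨σ', hm, by simp⟩
  have hpos : ∀ (D : Finset (Fin N → Bool)) i j, 0 ≤ edgeBoundaryMatrix N D i j := by
    intro D i j
    rw [edgeBoundaryMatrix]
    split <;> norm_num
  have hle : ∀ α i j, edgeBoundaryMatrix N (C α) i j ≤ edgeBoundaryMatrix N L i j := by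
    intro α i j
    by_cases hcond : hammingDist i j = 1 ∧ (i ∈ C α ∨ j ∈ C α)
    · have h1 : edgeBoundaryMatrix N (C α) i j = 1 := if_pos hcond
      have h2 : edgeBoundaryMatrix N L i j = 1 := by
        refine if_pos ⟨hcond.1, ?_⟩
        rcases hcond.2 with hm | hm
        · exact Or.inl ((hL i).mpr ⟨α, hm⟩)
        · exact Or.inr ((hL j).mpr ⟨α, hm⟩)
      rw [h1, h2]
    · have h1 : edgeBoundaryMatrix N (C α) i j = 0 := if_neg hcond
      rw [h1]
      exact hpos L i j
  have hge : ∀ α, matOpNorm (edgeBoundaryMatrix N (C α)) ≤ matOpNorm (edgeBoundaryMatrix N L) :=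
    fun α => matOpNorm_mono (hpos (C α)) (hle α)
  have hub : matOpNorm (edgeBoundaryMatrix N L) ≤ M := by
    refine matOpNorm_le_of_mulVec _ hM0 fun x => ?_
    set xa : ι → (Fin N → Bool) → ℝ := fun α σ => if near α σ then x σ else 0 with hxa
    have step1 : ∀ σ, ((edgeBoundaryMatrix N L).mulVec x σ) ^ 2 ≤
        ∑ α, (if near α σ then ((edgeBoundaryMatrix N (C α)).mulVec (xa α) σ) ^ 2 else 0) := by
      intro σ
      by_cases hσ : ∃ α, near α σ
      · obtain ⟨α₀, h0⟩ := hσ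
        have heq : (edgeBoundaryMatrix N L).mulVec x σ
            = (edgeBoundaryMatrix N (C α₀)).mulVec (xa α₀) σ := by
          show ∑ σ', edgeBoundaryMatrix N L σ σ' * x σ'
            = ∑ σ', edgeBoundaryMatrix N (C α₀) σ σ' * xa α₀ σ'
          refine Finset.sum_congr rfl fun σ' _ => ?_
          rw [hAL_eq α₀ σ h0 σ']
          by_cases hz : edgeBoundaryMatrix N (C α₀) σ σ' = 0
          · rw [hz, zero_mul, zero_mul]
          · have hn : near α₀ σ' := hcol α₀ σ σ' hz
            simp only [hxa, if_pos hn]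
        calc ((edgeBoundaryMatrix N L).mulVec x σ) ^ 2
            = (if near α₀ σ then ((edgeBoundaryMatrix N (C α₀)).mulVec (xa α₀) σ) ^ 2 else 0) := by
              rw [if_pos h0, heq]
          _ ≤ ∑ α, (if near α σ then ((edgeBoundaryMatrix N (C α)).mulVec (xa α) σ) ^ 2 else 0) := by
              refine Finset.single_le_sum (f := fun α => if near α σ then ((edgeBoundaryMatrix N (C α)).mulVec (xa α) σ) ^ 2 else 0) (fun i _ => ?_) (Finset.mem_univ α₀)
              split
              · exact sq_nonneg _
              · exact le_rfl
      · push_neg at hσ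
        have hz : (edgeBoundaryMatrix N L).mulVec x σ = 0 := by
          show ∑ σ', edgeBoundaryMatrix N L σ σ' * x σ' = 0
          exact Finset.sum_eq_zero fun σ' _ => by rw [hAL_zero σ hσ σ', zero_mul]
        rw [hz, zero_pow two_ne_zero]
        refine Finset.sum_nonneg fun i _ => ?_
        split
        · exact sq_nonneg _
        · exact le_rfl
    calc ∑ σ, ((edgeBoundaryMatrix N L).mulVec x σ) ^ 2
        ≤ ∑ σ, ∑ α, (if near α σ then ((edgeBoundaryMatrix N (C α)).mulVec (xa α) σ) ^ 2 else 0) :=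
          Finset.sum_le_sum fun σ _ => step1 σ
      _ = ∑ α, ∑ σ, (if near α σ then ((edgeBoundaryMatrix N (C α)).mulVec (xa α) σ) ^ 2 else 0) :=
          Finset.sum_comm
      _ ≤ ∑ α, ∑ σ, ((edgeBoundaryMatrix N (C α)).mulVec (xa α) σ) ^ 2 :=
          Finset.sum_le_sum fun α _ => Finset.sum_le_sum fun σ _ => by
            split
            · exact le_rfl
            · exact sq_nonneg _
      _ ≤ ∑ α, (matOpNorm (edgeBoundaryMatrix N (C α))) ^ 2 * ∑ σ, (xa α σ) ^ 2 :=
          Finset.sum_le_sum fun α _ => mulVec_sq_sum_le _ _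
      _ ≤ ∑ α, M ^ 2 * ∑ σ, (xa α σ) ^ 2 := by
          refine Finset.sum_le_sum fun α _ => ?_
          refine mul_le_mul_of_nonneg_right ?_ (by positivity)
          exact pow_le_pow_left₀ (norm_nonneg _)
            (Finset.le_sup' (fun α => matOpNorm (edgeBoundaryMatrix N (C α)))
              (Finset.mem_univ α)) 2
      _ = M ^ 2 * ∑ σ, ∑ α, (xa α σ) ^ 2 := by rw [← Finset.mul_sum, Finset.sum_comm]
      _ ≤ M ^ 2 * ∑ σ, (x σ) ^ 2 := by
          refine mul_le_mul_of_nonneg_left (Finset.sum_le_sum fun σ _ => ?_) (by positivity)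
          by_cases h : ∃ α, near α σ
          · obtain ⟨α₀, h0⟩ := h
            have hsum : ∑ α, (xa α σ) ^ 2 = (xa α₀ σ) ^ 2 :=
              Finset.sum_eq_single α₀
                (fun β _ hβ => by
                  simp only [hxa]
                  rw [if_neg (fun hb => hβ (huniq hb h0))]
                  exact zero_pow two_ne_zero)
                (fun hc => absurd (Finset.mem_univ α₀) hc)
            rw [hsum]
            simp only [hxa, if_pos h0]
            exact le_rfl
          · push_neg at h
            have hz : ∀ α, xa α σ = 0 := fun α => if_neg (h α)
            simp only [hz, zero_pow two_ne_zero, Finset.sum_const_zero]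
            exact sq_nonneg _
  have heqM : matOpNorm (edgeBoundaryMatrix N L) = M :=
    le_antisymm hub (Finset.sup'_le _ _ fun α _ => hge α)
  refine ⟨heqM, ?_⟩
  rw [heqM]
  refine Finset.sup'_le _ _ fun α _ => ?_
  refine (matOpNorm_le_frobenius _).trans (Real.sqrt_le_sqrt ?_)
  refine (frob_count N (C α)).trans ?_
  have hcard : ((C α).card : ℝ) ≤ ((Finset.univ.sup fun α => (C α).card : ℕ) : ℝ) :=
    Nat.cast_le.mpr (Finset.le_sup (f := fun α => (C α).card) (Finset.mem_univ α))
  have h2N : (0:ℝ) ≤ 2 * N := by positivity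
  nlinarith
end

section
/- Let V' ⊆ Q_N and let H' = ΓT' + U' where T' is the restriction of the negative hypercube adjacency operator to ℓ²(V') and U' is diagonal with U'(σ) ≥ -εN for all σ ∈ V'. Then 2^{-N} Tr_{ℓ²(V')} e^{-βH'} ≤ exp( N(βε + ln cosh(βΓ)) ) for all β, Γ ≥ 0. -/
open NormedSpace

namespace TB

variable {ι : Type*} [Fintype ι] [DecidableEq ι]

lemma pow_entry_bound (X : Matrix ι ι ℝ) :
    ∃ C : ℝ, 0 ≤ C ∧ ∀ n (i j : ι), |(X ^ n) i j| ≤ C ^ n := by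
  classical
  set K : ℝ := 1 + ∑ i : ι, ∑ j : ι, |X i j| with hKdef
  have hsum0 : (0:ℝ) ≤ ∑ i : ι, ∑ j : ι, |X i j| := by positivity
  have hK1 : (1:ℝ) ≤ K := by simp [hKdef]; linarith
  have hXK : ∀ i j : ι, |X i j| ≤ K := by
    intro i j
    have h1 : |X i j| ≤ ∑ j' : ι, |X i j'| :=
      Finset.single_le_sum (f := fun j' => |X i j'|) (fun k _ => abs_nonneg _) (Finset.mem_univ j)
    have h2 : (∑ j' : ι, |X i j'|) ≤ ∑ i' : ι, ∑ j' : ι, |X i' j'| :=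
      Finset.single_le_sum (f := fun i' => ∑ j' : ι, |X i' j'|)
        (fun k _ => Finset.sum_nonneg fun _ _ => abs_nonneg _) (Finset.mem_univ i)
    simp only [hKdef]; linarith
  refine ⟨(Fintype.card ι : ℝ) * K, by positivity, ?_⟩
  intro n
  induction n with
  | zero =>
    intro i j
    simp only [pow_zero, Matrix.one_apply]
    split <;> norm_num
  | succ n ih =>
    intro i j
    rw [pow_succ, Matrix.mul_apply]
    calc |∑ k : ι, (X ^ n) i k * X k j| ≤ ∑ k : ι, |(X ^ n) i k * X k j| :=
          Finset.abs_sum_le_sum_abs _ _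
      _ ≤ ∑ _k : ι, ((Fintype.card ι : ℝ) * K) ^ n * K := by
          refine Finset.sum_le_sum fun k _ => ?_
          rw [abs_mul]
          exact mul_le_mul (ih i k) (hXK k j) (abs_nonneg _)
            (by positivity)
      _ = (Fintype.card ι : ℝ) * (((Fintype.card ι : ℝ) * K) ^ n * K) := by
          simp [Finset.sum_const, mul_comm]
      _ ≤ ((Fintype.card ι : ℝ) * K) ^ (n + 1) := by
          rw [pow_succ]; ring_nf; exact le_refl _

lemma summable_exp_entries (X : Matrix ι ι ℝ) (i j : ι) :
    Summable (fun n : ℕ => (((n.factorial : ℝ)))⁻¹ * (X ^ n) i j) := by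
  obtain ⟨C, hC0, hC⟩ := pow_entry_bound X
  refine Summable.of_norm ?_
  refine Summable.of_nonneg_of_le (fun n => norm_nonneg _)
    (fun n => ?_) (Real.summable_pow_div_factorial C)
  rw [Real.norm_eq_abs, abs_mul, abs_inv, abs_of_nonneg (by positivity : (0:ℝ) ≤ ((n.factorial : ℝ)))]
  rw [div_eq_inv_mul]
  exact mul_le_mul_of_nonneg_left (hC n i j) (by positivity)

lemma matrix_exp_summable (X : Matrix ι ι ℝ) :
    Summable (fun n : ℕ => (((n.factorial : ℝ)))⁻¹ • X ^ n) := by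
  refine Pi.summable.mpr fun i => ?_
  refine Pi.summable.mpr fun j => ?_
  simpa [Matrix.smul_apply] using summable_exp_entries X i j

lemma exp_entry (X : Matrix ι ι ℝ) (i j : ι) :
    exp X i j = ∑' n : ℕ, (((n.factorial : ℝ)))⁻¹ * (X ^ n) i j := by
  rw [exp_eq_tsum ℝ]
  show (∑' n : ℕ, ((n.factorial : ℝ))⁻¹ • X ^ n) i j = _
  have h1 : (∑' n : ℕ, ((n.factorial : ℝ))⁻¹ • X ^ n) i = ∑' n : ℕ, (((n.factorial : ℝ))⁻¹ • X ^ n) i :=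
    tsum_apply (matrix_exp_summable X)
  rw [h1]
  rw [tsum_apply (Pi.summable.mp (matrix_exp_summable X) i)]
  congr 1


lemma pow_entry_mono {A B : Matrix ι ι ℝ} (hA : ∀ i j, 0 ≤ A i j)
    (hAB : ∀ i j, A i j ≤ B i j) :
    ∀ n (i j : ι), 0 ≤ (A ^ n) i j ∧ (A ^ n) i j ≤ (B ^ n) i j := by
  intro n
  induction n with
  | zero =>
    intro i j
    simp only [pow_zero, Matrix.one_apply]
    split <;> norm_num
  | succ n ih =>
    intro i j
    rw [pow_succ, pow_succ, Matrix.mul_apply, Matrix.mul_apply]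
    constructor
    · exact Finset.sum_nonneg fun k _ => mul_nonneg (ih i k).1 (hA k j)
    · refine Finset.sum_le_sum fun k _ => ?_
      exact mul_le_mul (ih i k).2 (hAB k j) (hA k j) ((ih i k).1.trans (ih i k).2)

lemma exp_entry_nonneg {A : Matrix ι ι ℝ} (hA : ∀ i j, 0 ≤ A i j) (i j : ι) :
    0 ≤ exp A i j := by
  rw [exp_entry]
  exact tsum_nonneg fun n => mul_nonneg (by positivity)
    (pow_entry_mono hA (fun i j => le_refl _) n i j).1

lemma exp_entry_mono {A B : Matrix ι ι ℝ} (hA : ∀ i j, 0 ≤ A i j)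
    (hAB : ∀ i j, A i j ≤ B i j) (i j : ι) :
    exp A i j ≤ exp B i j := by
  rw [exp_entry, exp_entry]
  refine Summable.tsum_le_tsum (fun n => ?_) (summable_exp_entries A i j) (summable_exp_entries B i j)
  exact mul_le_mul_of_nonneg_left (pow_entry_mono hA hAB n i j).2 (by positivity)

lemma submatrix_pow_le {κ : Type*} [Fintype κ] [DecidableEq κ]
    (A : Matrix ι ι ℝ) (hA : ∀ i j, 0 ≤ A i j) (f : κ → ι) (hf : Function.Injective f) :
    ∀ n (i j : κ), ((A.submatrix f f) ^ n) i j ≤ (A ^ n) (f i) (f j) := by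
  have hApow := pow_entry_mono hA (fun i j => le_refl (A i j))
  have hsub : ∀ i j : κ, 0 ≤ A.submatrix f f i j := fun i j => hA _ _
  have hsubpow := pow_entry_mono hsub (fun i j => le_refl (A.submatrix f f i j))
  intro n
  induction n with
  | zero =>
    intro i j
    simp only [pow_zero, Matrix.one_apply]
    by_cases h : i = j
    · simp [h]
    · have : f i ≠ f j := fun hc => h (hf hc)
      simp [h, this]
  | succ n ih =>
    intro i j
    rw [pow_succ, pow_succ, Matrix.mul_apply, Matrix.mul_apply]
    calc ∑ k : κ, ((A.submatrix f f) ^ n) i k * A.submatrix f f k j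
        ≤ ∑ k : κ, (A ^ n) (f i) (f k) * A (f k) (f j) := by
          refine Finset.sum_le_sum fun k _ => ?_
          exact mul_le_mul (ih i k) (le_refl _) (hA _ _)
            ((hsubpow n i k).1.trans (ih i k))
      _ = ∑ k ∈ Finset.univ.image f, (A ^ n) (f i) k * A k (f j) := by
          rw [Finset.sum_image (fun a _ b _ h => hf h)]
      _ ≤ ∑ k : ι, (A ^ n) (f i) k * A k (f j) := by
          refine Finset.sum_le_sum_of_subset_of_nonneg (Finset.subset_univ _) ?_
          intro k _ _
          exact mul_nonneg (hApow n (f i) k).1 (hA k (f j))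

lemma exp_submatrix_le {κ : Type*} [Fintype κ] [DecidableEq κ]
    (A : Matrix ι ι ℝ) (hA : ∀ i j, 0 ≤ A i j) (f : κ → ι) (hf : Function.Injective f)
    (i j : κ) :
    exp (A.submatrix f f) i j ≤ exp A (f i) (f j) := by
  rw [exp_entry, exp_entry]
  refine Summable.tsum_le_tsum (fun n => ?_) (summable_exp_entries _ i j)
    (summable_exp_entries A (f i) (f j))
  exact mul_le_mul_of_nonneg_left (submatrix_pow_le A hA f hf n i j) (by positivity)

lemma pi_exp_apply (v : ι → ℝ) (i : ι) : exp v i = Real.exp (v i) := by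
  have hs : Summable (fun n : ℕ => ((n.factorial : ℝ))⁻¹ • v ^ n) := by
    rw [Pi.summable]
    intro k
    have : Summable (fun n : ℕ => (v k) ^ n / (n.factorial : ℝ)) :=
      Real.summable_pow_div_factorial (v k)
    refine this.congr fun n => ?_
    simp [Pi.smul_apply, Pi.pow_apply, div_eq_inv_mul]
  rw [exp_eq_tsum ℝ]
  show (∑' n : ℕ, ((n.factorial : ℝ))⁻¹ • v ^ n) i = _
  rw [tsum_apply hs, Real.exp_eq_exp_ℝ, exp_eq_tsum ℝ]
  simp [Pi.smul_apply, Pi.pow_apply]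

lemma exp_smul_one (c : ℝ) : exp (c • (1 : Matrix ι ι ℝ)) = Real.exp c • 1 := by
  have h : c • (1 : Matrix ι ι ℝ) = Matrix.diagonal (fun _ => c) := by
    ext i j
    by_cases hij : i = j <;> simp [Matrix.one_apply, hij]
  rw [h, Matrix.exp_diagonal]
  ext i j
  by_cases hij : i = j <;>
    simp [Matrix.diagonal_apply, Matrix.one_apply, hij, pi_exp_apply, ← Real.exp_eq_exp_ℝ]


/-! ### The hypercube -/

variable {N : ℕ}

/-- positive adjacency matrix of the cube -/
def Amat (N : ℕ) : Matrix (Fin N → Bool) (Fin N → Bool) ℝ :=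
  fun σ σ' => if hammingDist σ σ' = 1 then 1 else 0

/-- character matrix -/
def chi (N : ℕ) : Matrix (Fin N → Bool) (Fin N → Bool) ℝ :=
  fun σ s => ∏ j : Fin N, (if σ j && s j then (-1:ℝ) else 1)

def lam (N : ℕ) : (Fin N → Bool) → ℝ :=
  fun s => ∑ j : Fin N, (if s j then (-1:ℝ) else 1)

lemma chi_symm (σ s : Fin N → Bool) : chi N σ s = chi N s σ := by
  unfold chi
  refine Finset.prod_congr rfl fun j _ => ?_
  rw [Bool.and_comm]

lemma chi_sq (σ s : Fin N → Bool) : chi N σ s * chi N σ s = 1 := by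
  unfold chi
  rw [← Finset.prod_mul_distrib]
  rw [Finset.prod_eq_one]
  intro j _
  split <;> norm_num

lemma sum_pi_bool_prod {M : Type*} [CommRing M] (g : Fin N → Bool → M) :
    ∑ s : Fin N → Bool, ∏ j : Fin N, g j (s j) = ∏ j : Fin N, (g j true + g j false) := by
  have := Finset.prod_univ_sum (fun _ : Fin N => (Finset.univ : Finset Bool)) (fun j b => g j b)
  rw [Fintype.piFinset_univ] at this
  rw [← this]
  refine Finset.prod_congr rfl fun j _ => ?_
  rw [Fintype.sum_bool]

lemma chi_mul_chi :
    chi N * chi N = ((2:ℝ) ^ N) • (1 : Matrix (Fin N → Bool) (Fin N → Bool) ℝ) := by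
  ext σ τ
  rw [Matrix.mul_apply]
  have h1 : ∀ s : Fin N → Bool, chi N σ s * chi N s τ =
      ∏ j : Fin N, ((if σ j && s j then (-1:ℝ) else 1) * (if τ j && s j then (-1:ℝ) else 1)) := by
    intro s
    rw [chi_symm s τ]
    unfold chi
    rw [← Finset.prod_mul_distrib]
  simp_rw [h1]
  rw [sum_pi_bool_prod (fun j b => (if σ j && b then (-1:ℝ) else 1) * (if τ j && b then (-1:ℝ) else 1))]
  by_cases h : σ = τ
  · subst h
    have : ∀ j : Fin N, ((if σ j && true then (-1:ℝ) else 1) * (if σ j && true then (-1:ℝ) else 1)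
        + (if σ j && false then (-1:ℝ) else 1) * (if σ j && false then (-1:ℝ) else 1)) = 2 := by
      intro j; cases hj : σ j <;> norm_num [hj]
    rw [Finset.prod_congr rfl fun j _ => this j]
    simp [Matrix.one_apply]
  · obtain ⟨j, hj⟩ := Function.ne_iff.mp h
    rw [Finset.prod_eq_zero (Finset.mem_univ j)]
    · simp [Matrix.one_apply, h]
    · cases hσ : σ j <;> cases hτ : τ j <;> simp_all

lemma filter_dist_one (σ : Fin N → Bool) :
    Finset.univ.filter (fun σ' => hammingDist σ σ' = 1) =
      Finset.univ.image (fun j : Fin N => Function.update σ j (!(σ j))) := by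
  ext σ'
  simp only [Finset.mem_filter, Finset.mem_univ, true_and, Finset.mem_image]
  constructor
  · intro h
    rw [hammingDist, Finset.card_eq_one] at h
    obtain ⟨j, hj⟩ := h
    refine ⟨j, ?_⟩
    funext k
    by_cases hk : k = j
    · subst hk
      have : σ k ≠ σ' k := by
        have : k ∈ ({k} : Finset (Fin N)) := Finset.mem_singleton_self k
        rw [← hj] at this
        simpa using this
      rw [Function.update_self]
      cases hσ : σ k <;> cases hσ' : σ' k <;> simp_all
    · have : k ∉ ({j} : Finset (Fin N)) := by simp [hk]
      rw [← hj] at this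
      simp only [Finset.mem_filter, Finset.mem_univ, true_and, not_not] at this
      rw [Function.update_of_ne hk, this]
  · rintro ⟨j, rfl⟩
    rw [hammingDist]
    have : ({i | σ i ≠ Function.update σ j (!(σ j)) i} : Finset (Fin N)) = {j} := by
      ext k
      simp only [Finset.mem_filter, Finset.mem_univ, true_and, Finset.mem_singleton]
      by_cases hk : k = j
      · subst hk
        simp [Function.update_self]
      · simp [Function.update_of_ne hk, hk]
    rw [this, Finset.card_singleton]

lemma update_injective (σ : Fin N → Bool) :
    Function.Injective (fun j : Fin N => Function.update σ j (!(σ j))) := by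
  intro j j' h
  by_contra hne
  have h1 := congrFun h j
  simp only [] at h1
  rw [Function.update_self, Function.update_of_ne hne] at h1
  cases σ j <;> simp_all

lemma chi_update (σ s : Fin N → Bool) (j : Fin N) :
    chi N (Function.update σ j (!(σ j))) s = (if s j then (-1:ℝ) else 1) * chi N σ s := by
  unfold chi
  rw [← Finset.mul_prod_erase Finset.univ _ (Finset.mem_univ j),
    ← Finset.mul_prod_erase Finset.univ (fun k => if σ k && s k then (-1:ℝ) else 1) (Finset.mem_univ j)]
  have herase : ∏ k ∈ Finset.univ.erase j, (if Function.update σ j (!(σ j)) k && s k then (-1:ℝ) else 1)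
      = ∏ k ∈ Finset.univ.erase j, (if σ k && s k then (-1:ℝ) else 1) := by
    refine Finset.prod_congr rfl fun k hk => ?_
    rw [Function.update_of_ne (Finset.ne_of_mem_erase hk)]
  rw [herase, Function.update_self, ← mul_assoc]
  congr 1
  cases hσ : σ j <;> cases hs : s j <;> simp

lemma Amat_mul_chi : Amat N * chi N = chi N * Matrix.diagonal (lam N) := by
  ext σ s
  rw [Matrix.mul_apply, Matrix.mul_diagonal]
  have h1 : ∑ σ' : Fin N → Bool, Amat N σ σ' * chi N σ' s
      = ∑ σ' ∈ Finset.univ.filter (fun σ' => hammingDist σ σ' = 1), chi N σ' s := by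
    rw [Finset.sum_filter]
    refine Finset.sum_congr rfl fun σ' _ => ?_
    unfold Amat
    split <;> simp
  rw [h1, filter_dist_one σ, Finset.sum_image (fun a _ b _ h => update_injective σ h)]
  simp_rw [chi_update]
  rw [← Finset.sum_mul]
  rw [mul_comm]
  rfl


lemma chi_right_inv : chi N * (((2:ℝ)^N)⁻¹ • chi N) = 1 := by
  rw [Matrix.mul_smul, chi_mul_chi, smul_smul]
  rw [inv_mul_cancel₀ (by positivity)]
  rw [one_smul]

lemma exp_smul_Amat_diag (x : ℝ) (σ : Fin N → Bool) :
    exp (x • Amat N) σ σ = Real.cosh x ^ N := by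
  have hIsUnit : IsUnit (chi N) := (Matrix.isUnit_iff_isUnit_det _).mpr (Matrix.isUnit_det_of_right_inverse chi_right_inv)
  have hchi_inv : (chi N)⁻¹ = ((2:ℝ)^N)⁻¹ • chi N := Matrix.inv_eq_right_inv chi_right_inv
  have hone : chi N * (chi N)⁻¹ = 1 := by rw [hchi_inv]; exact chi_right_inv
  have hA : x • Amat N = chi N * (Matrix.diagonal (fun s => x * lam N s)) * (chi N)⁻¹ := by
    have h2 : Amat N = chi N * Matrix.diagonal (lam N) * (chi N)⁻¹ := by
      have h3 : Amat N * (chi N * (chi N)⁻¹) = chi N * Matrix.diagonal (lam N) * (chi N)⁻¹ := by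
        rw [← Matrix.mul_assoc, Amat_mul_chi]
      rw [hone, Matrix.mul_one] at h3
      exact h3
    have hD : (Matrix.diagonal fun s => x * lam N s) = x • Matrix.diagonal (lam N) := by
      rw [← Matrix.diagonal_smul]
      rfl
    rw [h2, hD, mul_smul_comm, smul_mul_assoc]
  rw [hA, Matrix.exp_conj (chi N) _ hIsUnit, Matrix.exp_diagonal]
  have hg : (exp (fun s => x * lam N s) : (Fin N → Bool) → ℝ)
      = fun s => Real.exp (x * lam N s) := by
    funext s; exact pi_exp_apply _ s
  rw [hg, hchi_inv]
  rw [Matrix.mul_apply]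
  have hterm : ∀ s : Fin N → Bool,
      (chi N * Matrix.diagonal fun s => Real.exp (x * lam N s)) σ s
        * (((2:ℝ)^N)⁻¹ • chi N) s σ
      = ((2:ℝ)^N)⁻¹ * Real.exp (x * lam N s) := by
    intro s
    rw [Matrix.mul_diagonal, Matrix.smul_apply, chi_symm s σ, smul_eq_mul]
    calc chi N σ s * Real.exp (x * lam N s) * (((2:ℝ)^N)⁻¹ * chi N σ s)
        = (chi N σ s * chi N σ s) * (((2:ℝ)^N)⁻¹ * Real.exp (x * lam N s)) := by ring
      _ = ((2:ℝ)^N)⁻¹ * Real.exp (x * lam N s) := by rw [chi_sq]; ring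
  rw [Finset.sum_congr rfl fun s _ => hterm s]
  rw [← Finset.mul_sum]
  have hsum : ∑ s : Fin N → Bool, Real.exp (x * lam N s)
      = (2 * Real.cosh x) ^ N := by
    have h1 : ∀ s : Fin N → Bool, Real.exp (x * lam N s)
        = ∏ j : Fin N, Real.exp (x * (if s j then (-1:ℝ) else 1)) := by
      intro s
      rw [← Real.exp_sum]
      congr 1
      rw [lam, Finset.mul_sum]
    rw [Finset.sum_congr rfl fun s _ => h1 s]
    rw [sum_pi_bool_prod (fun j b => Real.exp (x * (if b then (-1:ℝ) else 1)))]
    have h2 : Real.exp (x * (if (true:Bool) then (-1:ℝ) else 1))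
        + Real.exp (x * (if (false:Bool) then (-1:ℝ) else 1)) = 2 * Real.cosh x := by
      norm_num [Real.cosh_eq]
      ring
    rw [Finset.prod_congr rfl fun j _ => h2, Finset.prod_const, Finset.card_univ,
      Fintype.card_fin]
  rw [hsum]
  rw [mul_pow]
  rw [← mul_assoc]
  rw [inv_mul_cancel₀ (by positivity : ((2:ℝ)^N) ≠ 0)]
  rw [one_mul]

end TB

open TB NormedSpace

/-- For `H' = ΓT' + U'` on `ℓ²(V')` with `T'` the restriction of the negative hypercube
adjacency operator and `U' ≥ -εN` diagonal,
`2^{-N} Tr e^{-βH'} ≤ exp(N(βε + ln cosh(βΓ)))`. -/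
theorem restricted_trace_bound (N : ℕ) (V' : Finset (Fin N → Bool)) (β Γ ε : ℝ)
    (hβ : 0 ≤ β) (hΓ : 0 ≤ Γ)
    (U' : {x // x ∈ V'} → ℝ) (hU : ∀ σ, -(ε * N) ≤ U' σ) :
    (2 : ℝ)⁻¹ ^ N * (NormedSpace.exp (-(β •
        (Γ • ((Tmat N).submatrix (Subtype.val : {x // x ∈ V'} → (Fin N → Bool)) Subtype.val)
          + Matrix.diagonal U')))).trace ≤
      Real.exp (N * (β * ε + Real.log (Real.cosh (β * Γ)))) := by
  classical
  set M : Matrix {x // x ∈ V'} {x // x ∈ V'} ℝ := -(β •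
        (Γ • ((Tmat N).submatrix (Subtype.val : {x // x ∈ V'} → (Fin N → Bool)) Subtype.val)
          + Matrix.diagonal U')) with hMdef
  rcases isEmpty_or_nonempty {x // x ∈ V'} with hE | hNE
  · have : (exp M).trace = 0 := by
      unfold Matrix.trace
      simp
    rw [this, mul_zero]
    positivity
  -- notation
  have hTA : ∀ σ σ' : Fin N → Bool, Tmat N σ σ' = -(Amat N σ σ') := by
    intro σ σ'
    unfold Tmat TB.Amat
    split <;> norm_num
  have hAnn : ∀ σ σ' : Fin N → Bool, 0 ≤ Amat N σ σ' := by
    intro σ σ'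
    unfold TB.Amat
    split <;> norm_num
  have hAdiag : ∀ σ : Fin N → Bool, Amat N σ σ = 0 := by
    intro σ
    unfold TB.Amat
    rw [hammingDist_self]
    norm_num
  set G : Matrix {x // x ∈ V'} {x // x ∈ V'} ℝ :=
    ((β * Γ) • Amat N).submatrix Subtype.val Subtype.val with hGdef
  have hGnn : ∀ i j, 0 ≤ G i j := by
    intro i j
    simp only [hGdef, Matrix.submatrix_apply, Matrix.smul_apply, smul_eq_mul]
    exact mul_nonneg (mul_nonneg hβ hΓ) (hAnn _ _)
  set c : ℝ := (Finset.univ.sup' Finset.univ_nonempty (fun i : {x // x ∈ V'} => β * U' i)) ⊔ 0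
    with hcdef
  have hc0 : 0 ≤ c := le_max_right _ _
  have hcU : ∀ i, β * U' i ≤ c := fun i =>
    le_trans (Finset.le_sup' (f := fun i : {x // x ∈ V'} => β * U' i) (Finset.mem_univ i))
      (le_max_left _ _)
  set d : ℝ := β * (ε * N) + c with hddef
  have hβU : ∀ i, -(β * U' i) ≤ β * (ε * N) := by
    intro i
    have h := mul_le_mul_of_nonneg_left (hU i) hβ
    nlinarith [h]
  have hd0 : 0 ≤ d := by
    obtain ⟨i0⟩ := hNE
    have h1 := hβU i0
    have h2 := hcU i0
    simp only [hddef]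
    linarith
  set M2 : Matrix {x // x ∈ V'} {x // x ∈ V'} ℝ := M + c • 1 with hM2def
  set B : Matrix {x // x ∈ V'} {x // x ∈ V'} ℝ := G + d • 1 with hBdef
  -- entries of M
  have hMentry : ∀ i j, M i j = (if i = j then -(β * U' i) else G i j) := by
    intro i j
    by_cases hij : i = j
    · subst hij
      simp only [hMdef, Matrix.neg_apply, Matrix.smul_apply, Matrix.add_apply,
        Matrix.submatrix_apply, Matrix.diagonal_apply_eq, smul_eq_mul, if_pos rfl]
      rw [hTA, hAdiag]
      simp
    · have hvv : (i : Fin N → Bool) ≠ (j : Fin N → Bool) := fun h => hij (Subtype.ext h)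
      simp only [hMdef, Matrix.neg_apply, Matrix.smul_apply, Matrix.add_apply,
        Matrix.submatrix_apply, Matrix.diagonal_apply_ne _ hij, smul_eq_mul, if_neg hij,
        hGdef]
      rw [hTA]
      ring
  have hM2nn : ∀ i j, 0 ≤ M2 i j := by
    intro i j
    by_cases hij : i = j
    · subst hij
      simp only [hM2def, Matrix.add_apply, Matrix.smul_apply, Matrix.one_apply_eq,
        smul_eq_mul, mul_one, hMentry, if_pos rfl, if_true, eq_self_iff_true]
      have := hcU i
      linarith
    · simp only [hM2def, Matrix.add_apply, Matrix.smul_apply, Matrix.one_apply_ne hij,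
        smul_eq_mul, mul_zero, add_zero, hMentry, if_neg hij]
      exact hGnn i j
  have hM2B : ∀ i j, M2 i j ≤ B i j := by
    intro i j
    by_cases hij : i = j
    · subst hij
      simp only [hM2def, hBdef, Matrix.add_apply, Matrix.smul_apply, Matrix.one_apply_eq,
        smul_eq_mul, mul_one, hMentry, if_pos rfl, if_true, eq_self_iff_true]
      have h1 := hβU i
      have h2 : G i i = 0 := by
        simp only [hGdef, Matrix.submatrix_apply, Matrix.smul_apply, smul_eq_mul, hAdiag,
          mul_zero]
      rw [h2]
      simp only [hddef]
      linarith
    · simp only [hM2def, hBdef, Matrix.add_apply, Matrix.smul_apply, Matrix.one_apply_ne hij,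
        smul_eq_mul, mul_zero, add_zero, hMentry, if_neg hij]
      exact le_rfl
  -- exp identities
  have hexpM2 : exp M2 = Real.exp c • exp M := by
    rw [hM2def, Matrix.exp_add_of_commute M (c • 1) ((Commute.one_right M).smul_right c),
      TB.exp_smul_one, mul_smul_comm, mul_one]
  have hexpB : exp B = Real.exp d • exp G := by
    rw [hBdef, Matrix.exp_add_of_commute G (d • 1) ((Commute.one_right G).smul_right d),
      TB.exp_smul_one, mul_smul_comm, mul_one]
  have hGdiag : ∀ i, exp G i i ≤ Real.cosh (β * Γ) ^ N := by
    intro i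
    have h1 := TB.exp_submatrix_le ((β * Γ) • Amat N)
      (fun σ σ' => by
        simp only [Matrix.smul_apply, smul_eq_mul]
        exact mul_nonneg (mul_nonneg hβ hΓ) (hAnn _ _))
      (Subtype.val : {x // x ∈ V'} → (Fin N → Bool)) Subtype.val_injective i i
    rw [TB.exp_smul_Amat_diag (β * Γ) (i : Fin N → Bool)] at h1
    exact h1
  -- trace chain
  have htrM2 : (exp M2).trace ≤ (Fintype.card {x // x ∈ V'} : ℝ) *
      (Real.exp d * Real.cosh (β * Γ) ^ N) := by
    unfold Matrix.trace
    calc ∑ i, (exp M2).diag i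
        ≤ ∑ i : {x // x ∈ V'}, Real.exp d * Real.cosh (β * Γ) ^ N := by
          refine Finset.sum_le_sum fun i _ => ?_
          calc (exp M2).diag i = exp M2 i i := rfl
            _ ≤ exp B i i := TB.exp_entry_mono hM2nn hM2B i i
            _ = Real.exp d * exp G i i := by
                rw [hexpB]; simp [smul_eq_mul]
            _ ≤ Real.exp d * Real.cosh (β * Γ) ^ N :=
                mul_le_mul_of_nonneg_left (hGdiag i) (Real.exp_nonneg d)
      _ = (Fintype.card {x // x ∈ V'} : ℝ) * (Real.exp d * Real.cosh (β * Γ) ^ N) := by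
          rw [Finset.sum_const, Finset.card_univ, nsmul_eq_mul]
  have hcard : (Fintype.card {x // x ∈ V'} : ℝ) ≤ (2:ℝ) ^ N := by
    have h1 : Fintype.card {x // x ∈ V'} ≤ Fintype.card (Fin N → Bool) := by
      rw [Fintype.card_coe]
      exact Finset.card_le_univ V'
    have h2 : Fintype.card (Fin N → Bool) = 2 ^ N := by
      simp
    calc (Fintype.card {x // x ∈ V'} : ℝ) ≤ (Fintype.card (Fin N → Bool) : ℝ) := by
          exact_mod_cast h1
      _ = (2:ℝ) ^ N := by rw [h2]; push_cast; ring
  have htrM : (exp M).trace = Real.exp (-c) * (exp M2).trace := by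
    rw [hexpM2, Matrix.trace_smul, smul_eq_mul, ← mul_assoc, ← Real.exp_add]
    rw [neg_add_cancel, Real.exp_zero, one_mul]
  have hcoshpos : 0 < Real.cosh (β * Γ) := Real.cosh_pos _
  have hfinal : (exp M).trace ≤ (2:ℝ) ^ N * (Real.exp (β * (ε * N)) *
      Real.cosh (β * Γ) ^ N) := by
    rw [htrM]
    calc Real.exp (-c) * (exp M2).trace
        ≤ Real.exp (-c) * ((Fintype.card {x // x ∈ V'} : ℝ) *
            (Real.exp d * Real.cosh (β * Γ) ^ N)) :=
          mul_le_mul_of_nonneg_left htrM2 (Real.exp_nonneg _)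
      _ ≤ Real.exp (-c) * ((2:ℝ) ^ N * (Real.exp d * Real.cosh (β * Γ) ^ N)) := by
          refine mul_le_mul_of_nonneg_left ?_ (Real.exp_nonneg _)
          refine mul_le_mul_of_nonneg_right hcard ?_
          positivity
      _ = (2:ℝ) ^ N * ((Real.exp (-c) * Real.exp d) * Real.cosh (β * Γ) ^ N) := by ring
      _ = (2:ℝ) ^ N * (Real.exp (β * (ε * N)) * Real.cosh (β * Γ) ^ N) := by
          rw [← Real.exp_add]
          congr 2
          simp only [hddef]
          ring_nf
  calc (2 : ℝ)⁻¹ ^ N * (exp M).trace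
      ≤ (2 : ℝ)⁻¹ ^ N * ((2:ℝ) ^ N * (Real.exp (β * (ε * N)) * Real.cosh (β * Γ) ^ N)) :=
        mul_le_mul_of_nonneg_left hfinal (by positivity)
    _ = Real.exp (β * (ε * N)) * Real.cosh (β * Γ) ^ N := by
        rw [← mul_assoc, ← mul_pow]
        norm_num
    _ = Real.exp (N * (β * ε + Real.log (Real.cosh (β * Γ)))) := by
        rw [mul_add, Real.exp_add]
        congr 1
        · congr 1
          ring
        · rw [Real.exp_nat_mul, Real.exp_log hcoshpos]
end
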